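/- Pointwise bounds for the kernel g_s: let m ≥ 1 be an integer. There is a constant C depending only on m such that for every s > 0 the function g_s(t) = Σ_{k=0}^{m} binom(m,k) (−1)^k 1_{{t>ks}} (t − ks)^{−1/2}, defined for t > 0, satisfies: (i) if 0 ≤ k ≤ m and ks < t ≤ (k+1)s ≤ (m+1)s, then |g_s(t)| ≤ C (t − ks)^{−1/2}; and (ii) if t > (m+1)s, then |g_s(t)| ≤ C s^m t^{−m−1/2}. -/

import Mathlib

noncomputable section

open Finset

/-- Iterated MVT for forward differences of `x ^ p` (rpow). -/
lemma key_mvt : ∀ (n : ℕ) (p s : ℝ), 0 < s → ∀ t : ℝ, (n : ℝ) * s < t →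
    ∃ ξ : ℝ, t - (n : ℝ) * s ≤ ξ ∧ ξ ≤ t ∧
      (fwdDiff (-s))^[n] (fun x : ℝ => x ^ p) t
        = (∏ j ∈ Finset.range n, (p - (j : ℝ))) * (-s) ^ n * ξ ^ (p - (n : ℝ)) := by
  intro n
  induction n with
  | zero =>
    intro p s hs t ht
    exact ⟨t, by simp, le_refl t, by simp⟩
  | succ n ih =>
    intro p s hs t ht
    push_cast at ht
    have hns : (n : ℝ) * s < t - s := by linarith
    set F : ℝ → ℝ := (fwdDiff (-s))^[n] (fun x : ℝ => x ^ p) with hFdef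
    set G : ℝ → ℝ := fun x => ∑ k ∈ range (n + 1),
      ((-1 : ℝ) ^ (n - k) * (n.choose k : ℝ)) * (p * (x - (k : ℝ) * s) ^ (p - 1)) with hGdef
    have hF : ∀ x : ℝ, F x = ∑ k ∈ range (n + 1),
        ((-1 : ℝ) ^ (n - k) * (n.choose k : ℝ)) * (x - (k : ℝ) * s) ^ p := by
      intro x
      rw [hFdef, fwdDiff_iter_eq_sum_shift]
      refine Finset.sum_congr rfl fun k hk => ?_
      have : x + k • (-s) = x - (k : ℝ) * s := by
        simp [nsmul_eq_mul]; ring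
      rw [this, zsmul_eq_mul]
      push_cast
      ring
    have hderiv : ∀ x ∈ Set.Icc (t - s) t, HasDerivAt F (G x) x := by
      intro x hx
      have hxlb : t - s ≤ x := hx.1
      have hF' : F = fun x => ∑ k ∈ range (n + 1),
          ((-1 : ℝ) ^ (n - k) * (n.choose k : ℝ)) * (x - (k : ℝ) * s) ^ p := funext hF
      rw [hF', hGdef]
      apply HasDerivAt.fun_sum
      intro k hk
      have hkn : (k : ℝ) ≤ (n : ℝ) := by
        exact_mod_cast Nat.lt_succ_iff.mp (mem_range.mp hk)
      have hne : x - (k : ℝ) * s ≠ 0 := by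
        have : (k : ℝ) * s ≤ (n : ℝ) * s := by nlinarith
        nlinarith
      have h1 : HasDerivAt (fun y : ℝ => y - (k : ℝ) * s) 1 x := by
        simpa using (hasDerivAt_id x).sub_const ((k : ℝ) * s)
      have h2 := (Real.hasDerivAt_rpow_const (x := x - (k : ℝ) * s) (p := p)
        (Or.inl hne)).comp x h1
      simpa [mul_comm, mul_assoc, mul_left_comm] using
        h2.const_mul ((-1 : ℝ) ^ (n - k) * (n.choose k : ℝ))
    obtain ⟨c, hc, hc'⟩ := exists_hasDerivAt_eq_slope F G (by linarith : t - s < t)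
      (fun x hx => (hderiv x hx).continuousAt.continuousWithinAt)
      (fun x hx => hderiv x (Set.Ioo_subset_Icc_self hx))
    have hGc : G c * s = F t - F (t - s) := by
      rw [hc']
      rw [show t - (t - s) = s by ring]
      field_simp
    have hGc2 : G c = p * (fwdDiff (-s))^[n] (fun x : ℝ => x ^ (p - 1)) c := by
      rw [fwdDiff_iter_eq_sum_shift, Finset.mul_sum, hGdef]
      refine Finset.sum_congr rfl fun k hk => ?_
      have : c + k • (-s) = c - (k : ℝ) * s := by
        simp [nsmul_eq_mul]; ring
      rw [this, zsmul_eq_mul]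
      push_cast
      ring
    obtain ⟨ξ, hξ1, hξ2, hξ3⟩ := ih (p - 1) s hs c (by
      have := hc.1
      linarith)
    refine ⟨ξ, ?_, ?_, ?_⟩
    · push_cast
      have := hc.1
      linarith
    · linarith [hc.2]
    · rw [Function.iterate_succ_apply']
      have hstep : fwdDiff (-s) F t = F (t - s) - F t := by
        show F (t + -s) - F t = F (t - s) - F t
        ring_nf
      rw [show (fwdDiff (-s)) ((fwdDiff (-s))^[n] fun x : ℝ => x ^ p) t
            = fwdDiff (-s) F t from rfl, hstep]
      have : F (t - s) - F t = -(G c * s) := by rw [hGc]; ring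
      rw [this, hGc2, hξ3]
      have hprod : ∏ j ∈ Finset.range (n + 1), (p - (j : ℝ))
          = p * ∏ j ∈ Finset.range n, (p - 1 - (j : ℝ)) := by
        rw [Finset.prod_range_succ']
        have : ∀ j ∈ Finset.range n, (p - ((j + 1 : ℕ) : ℝ)) = p - 1 - (j : ℝ) := by
          intro j hj; push_cast; ring
        rw [Finset.prod_congr rfl this]
        push_cast
        ring
      rw [hprod, show ((n + 1 : ℕ) : ℝ) = (n : ℝ) + 1 by push_cast; ring,
        show p - ((n : ℝ) + 1) = p - 1 - (n : ℝ) by ring]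
      ring



lemma sqrt_inv_eq_rpow {x : ℝ} (hx : 0 < x) :
    (Real.sqrt x)⁻¹ = x ^ (-(1 : ℝ) / 2) := by
  rw [Real.sqrt_eq_rpow, ← Real.rpow_neg hx.le]
  norm_num

/-- The kernel `g_s(t) = Σ_{k=0}^m binom(m,k)(−1)^k 1_{t > ks} (t − ks)^{−1/2}`. -/
noncomputable def gker (m : ℕ) (s t : ℝ) : ℝ :=
  ∑ k ∈ Finset.range (m + 1), (m.choose k : ℝ) * (-1) ^ k *
    (if (k : ℝ) * s < t then (Real.sqrt (t - (k : ℝ) * s))⁻¹ else 0)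

/-- Pointwise bounds for `g_s`: for `m ≥ 1` there is `C = C(m)` such that for every `s > 0`:
(i) if `0 ≤ k ≤ m` and `ks < t ≤ (k+1)s`, then `|g_s(t)| ≤ C (t − ks)^{−1/2}`;
(ii) if `t > (m+1)s`, then `|g_s(t)| ≤ C s^m t^{−m−1/2}`. -/
theorem gker_pointwise_bounds (m : ℕ) (hm : 1 ≤ m) :
    ∃ C : ℝ, 0 < C ∧
      ∀ s : ℝ, 0 < s → ∀ t : ℝ,
        (∀ k : ℕ, k ≤ m → (k : ℝ) * s < t → t ≤ ((k : ℝ) + 1) * s →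
          |gker m s t| ≤ C * (Real.sqrt (t - (k : ℝ) * s))⁻¹) ∧
        (((m : ℝ) + 1) * s < t →
          |gker m s t| ≤ C * s ^ m * t ^ (-(m : ℝ) - 1 / 2)) := by

  set P : ℝ := ∏ j ∈ Finset.range m, (-(1 : ℝ) / 2 - (j : ℝ)) with hP
  set C : ℝ := 2 ^ m + |P| * ((m : ℝ) + 1) ^ ((m : ℝ) + 1 / 2) + 1 with hC
  have hCpos : 0 < C := by positivity
  refine ⟨C, hCpos, fun s hs t => ⟨?_, ?_⟩⟩
  · -- part (i)
    intro k hk hlt hle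
    have hpos : 0 < t - (k : ℝ) * s := by linarith
    have hsq : 0 < Real.sqrt (t - (k : ℝ) * s) := Real.sqrt_pos.mpr hpos
    have hinv : 0 ≤ (Real.sqrt (t - (k : ℝ) * s))⁻¹ := by positivity
    have hbd : |gker m s t| ≤ 2 ^ m * (Real.sqrt (t - (k : ℝ) * s))⁻¹ := by
      calc |gker m s t| ≤ ∑ j ∈ Finset.range (m + 1),
            |(m.choose j : ℝ) * (-1) ^ j *
              (if (j : ℝ) * s < t then (Real.sqrt (t - (j : ℝ) * s))⁻¹ else 0)| :=
          Finset.abs_sum_le_sum_abs _ _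
        _ ≤ ∑ j ∈ Finset.range (m + 1),
            (m.choose j : ℝ) * (Real.sqrt (t - (k : ℝ) * s))⁻¹ := by
          refine Finset.sum_le_sum fun j hj => ?_
          rw [abs_mul, abs_mul, abs_pow, abs_neg, abs_one, one_pow, mul_one,
            Nat.abs_cast]
          refine mul_le_mul_of_nonneg_left ?_ (Nat.cast_nonneg _)
          by_cases h : (j : ℝ) * s < t
          · rw [if_pos h]
            have hjk : (j : ℝ) ≤ (k : ℝ) := by
              have hj1 : (j : ℝ) * s < ((k : ℝ) + 1) * s := lt_of_lt_of_le h hle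
              have : (j : ℝ) < (k : ℝ) + 1 := lt_of_mul_lt_mul_right hj1 hs.le
              have : j < k + 1 := by exact_mod_cast this
              exact_mod_cast Nat.lt_succ_iff.mp this
            have hjpos : 0 < t - (j : ℝ) * s := by linarith
            rw [abs_of_nonneg (by positivity)]
            refine inv_anti₀ hsq (Real.sqrt_le_sqrt ?_)
            nlinarith
          · rw [if_neg h, abs_zero]
            exact hinv
        _ = 2 ^ m * (Real.sqrt (t - (k : ℝ) * s))⁻¹ := by
          rw [← Finset.sum_mul]
          congr 1
          exact_mod_cast congrArg (Nat.cast : ℕ → ℝ) (Nat.sum_range_choose m)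
    refine hbd.trans ?_
    apply mul_le_mul_of_nonneg_right _ hinv
    have h1 : (0 : ℝ) ≤ |P| * ((m : ℝ) + 1) ^ ((m : ℝ) + 1 / 2) := by positivity
    rw [hC]; linarith
  · -- part (ii)
    intro ht
    have ht0 : 0 < t := lt_trans (by positivity) ht
    have hms : (m : ℝ) * s < t := by nlinarith
    obtain ⟨ξ, hξ1, hξ2, hξ3⟩ := key_mvt m (-(1 : ℝ) / 2) s hs t hms
    have hdiv : t / ((m : ℝ) + 1) ≤ t - (m : ℝ) * s := by
      rw [div_le_iff₀ (by positivity : (0 : ℝ) < (m : ℝ) + 1)]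
      nlinarith [mul_le_mul_of_nonneg_left ht.le (Nat.cast_nonneg m : (0 : ℝ) ≤ (m : ℝ))]
    have hξlb : t / ((m : ℝ) + 1) ≤ ξ := le_trans hdiv hξ1
    have hξpos : 0 < ξ := lt_of_lt_of_le (by positivity) hξlb
    -- express gker as iterated difference
    have hsum : gker m s t
        = (-1 : ℝ) ^ m * (fwdDiff (-s))^[m] (fun x : ℝ => x ^ (-(1 : ℝ) / 2)) t := by
      rw [fwdDiff_iter_eq_sum_shift, Finset.mul_sum, gker]
      refine Finset.sum_congr rfl fun k hk => ?_
      have hk' : k ≤ m := Nat.lt_succ_iff.mp (Finset.mem_range.mp hk)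
      have hkR : (k : ℝ) ≤ (m : ℝ) := by exact_mod_cast hk'
      have hks : (k : ℝ) * s < t := by nlinarith
      have hkpos : 0 < t - (k : ℝ) * s := by linarith
      rw [if_pos hks, sqrt_inv_eq_rpow hkpos]
      have harg : t + k • (-s) = t - (k : ℝ) * s := by
        simp [nsmul_eq_mul]; ring
      rw [harg, zsmul_eq_mul]
      push_cast
      have hsq : ∀ a : ℕ, (-1 : ℝ) ^ a * (-1 : ℝ) ^ a = 1 := fun a => by
        rw [← pow_add]; exact Even.neg_one_pow ⟨a, rfl⟩
      have hsign : (-1 : ℝ) ^ m * (-1 : ℝ) ^ (m - k) = (-1 : ℝ) ^ k := by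
        have h1 : (-1 : ℝ) ^ (m - k) * (-1 : ℝ) ^ k = (-1 : ℝ) ^ m := by
          rw [← pow_add, Nat.sub_add_cancel hk']
        calc (-1 : ℝ) ^ m * (-1 : ℝ) ^ (m - k)
            = ((-1 : ℝ) ^ (m - k) * (-1 : ℝ) ^ k) * (-1 : ℝ) ^ (m - k) := by rw [h1]
          _ = ((-1 : ℝ) ^ (m - k) * (-1 : ℝ) ^ (m - k)) * (-1 : ℝ) ^ k := by ring
          _ = (-1 : ℝ) ^ k := by rw [hsq]; ring
      linear_combination (-((m.choose k : ℝ) * (t - (k : ℝ) * s) ^ (-(1 : ℝ) / 2))) * hsign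
    have habs : |gker m s t| = |P| * s ^ m * ξ ^ (-(1 : ℝ) / 2 - (m : ℝ)) := by
      rw [hsum, hξ3, ← hP]
      rw [abs_mul, abs_pow, abs_neg, abs_one, one_pow, one_mul,
        abs_mul, abs_mul, abs_pow, abs_neg, abs_of_pos hs,
        abs_of_pos (Real.rpow_pos_of_pos hξpos _)]
    rw [habs]
    have hrbd : ξ ^ (-(1 : ℝ) / 2 - (m : ℝ))
        ≤ ((m : ℝ) + 1) ^ ((m : ℝ) + 1 / 2) * t ^ (-(m : ℝ) - 1 / 2) := by
      have h1 : ξ ^ (-(1 : ℝ) / 2 - (m : ℝ))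
          ≤ (t / ((m : ℝ) + 1)) ^ (-(1 : ℝ) / 2 - (m : ℝ)) :=
        Real.rpow_le_rpow_of_nonpos (by positivity) hξlb
          (by have h0 : (0 : ℝ) ≤ (m : ℝ) := Nat.cast_nonneg m; linarith)
      refine h1.trans_eq ?_
      rw [Real.div_rpow ht0.le (by positivity), div_eq_mul_inv,
        ← Real.rpow_neg (by positivity : (0 : ℝ) ≤ (m : ℝ) + 1),
        show -(-(1 : ℝ) / 2 - (m : ℝ)) = (m : ℝ) + 1 / 2 by ring,
        show -(1 : ℝ) / 2 - (m : ℝ) = -(m : ℝ) - 1 / 2 by ring]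
      ring
    calc |P| * s ^ m * ξ ^ (-(1 : ℝ) / 2 - (m : ℝ))
        ≤ |P| * s ^ m * (((m : ℝ) + 1) ^ ((m : ℝ) + 1 / 2) * t ^ (-(m : ℝ) - 1 / 2)) := by
          apply mul_le_mul_of_nonneg_left hrbd (by positivity)
      _ = (|P| * ((m : ℝ) + 1) ^ ((m : ℝ) + 1 / 2)) * s ^ m * t ^ (-(m : ℝ) - 1 / 2) := by
          ring
      _ ≤ C * s ^ m * t ^ (-(m : ℝ) - 1 / 2) := by
          apply mul_le_mul_of_nonneg_right _ (Real.rpow_nonneg ht0.le _)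
          apply mul_le_mul_of_nonneg_right _ (by positivity)
          rw [hC]
          have : (0 : ℝ) < 2 ^ m := by positivity
          linarith
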